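/- Let τ > 0, and let E : ℕ → ℝ be a monotone nondecreasing sequence of real numbers (the energy eigenvalues) with E i ≥ 0 for all i. Let α : ℕ → ℂ satisfy ∑'_i ‖α i‖² = 1 (the expansion coefficients of a unit vector in the energy eigenbasis). Then for every ε > 0 there exists an integer n > 0 such that ∑'_i ‖α i‖² · ‖exp(−i·(E i)·τ·n) − 1‖² < ε², where i in the exponent denotes the imaginary unit. -/

import Mathlib

lemma norm_exp_re_zero (z : ℂ) (hz : z.re = 0) : ‖Complex.exp z‖ = 1 := by
  rw [Complex.norm_exp, hz, Real.exp_zero]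

lemma norm_exp_neg_I_mul (r : ℝ) (n : ℕ) : ‖Complex.exp (-Complex.I * r * n) - 1‖ ≤ 2 := by
  calc ‖Complex.exp (-Complex.I * r * n) - 1‖
      ≤ ‖Complex.exp (-Complex.I * r * n)‖ + ‖(1:ℂ)‖ := norm_sub_le _ _
    _ ≤ 2 := by
        rw [norm_exp_re_zero _ (by simp)]
        norm_num

lemma simul_recurrence (N : ℕ) (θ : Fin N → ℝ) (δ : ℝ) (hδ : 0 < δ) :
    ∃ n : ℕ, 0 < n ∧ ∀ j, ‖Complex.exp (-Complex.I * θ j * n) - 1‖ < δ := by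
  set f : ℕ → (Fin N → ℂ) := fun n j => Complex.exp (-Complex.I * θ j * n) with hf
  have hmem : ∀ n, f n ∈ Set.univ.pi (fun _ : Fin N => Metric.closedBall (0:ℂ) 1) := by
    intro n j _
    simp only [Metric.mem_closedBall, dist_zero_right, hf]
    rw [norm_exp_re_zero _ (by simp)]
  have hK : IsCompact (Set.univ.pi (fun _ : Fin N => Metric.closedBall (0:ℂ) 1)) :=
    isCompact_univ_pi (fun _ => isCompact_closedBall 0 1)
  obtain ⟨x, -, φ, hφ, hconv⟩ := hK.tendsto_subseq hmem
  obtain ⟨M, hM⟩ := Metric.tendsto_atTop.mp hconv (δ/2) (half_pos hδ)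
  have h1 := hM M le_rfl
  have h2 := hM (M+1) (Nat.le_succ M)
  have hlt : φ M < φ (M+1) := hφ (Nat.lt_succ_self M)
  refine ⟨φ (M+1) - φ M, Nat.sub_pos_of_lt hlt, fun j => ?_⟩
  have hdist : dist (f (φ M)) (f (φ (M+1))) < δ := by
    calc dist (f (φ M)) (f (φ (M+1)))
        ≤ dist ((f ∘ φ) M) x + dist ((f ∘ φ) (M+1)) x := dist_triangle_right _ _ _
      _ < δ/2 + δ/2 := add_lt_add h1 h2
      _ = δ := add_halves δ
  have hj : dist (f (φ M) j) (f (φ (M+1)) j) < δ :=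
    lt_of_le_of_lt (dist_le_pi_dist _ _ j) hdist
  have hcast : ((φ (M+1) : ℂ)) = ((φ (M+1) - φ M : ℕ) : ℂ) + (φ M : ℂ) := by
    push_cast [Nat.cast_sub hlt.le]
    ring
  have key : f (φ (M+1)) j - f (φ M) j
      = f (φ M) j * (Complex.exp (-Complex.I * θ j * ((φ (M+1) - φ M : ℕ) : ℂ)) - 1) := by
    simp only [hf]
    rw [hcast, mul_add, Complex.exp_add]
    ring
  have hnorm1 : ‖f (φ M) j‖ = 1 := by
    simp only [hf]
    exact norm_exp_re_zero _ (by simp)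
  calc ‖Complex.exp (-Complex.I * θ j * ((φ (M+1) - φ M : ℕ) : ℂ)) - 1‖
      = ‖f (φ M) j‖ * ‖Complex.exp (-Complex.I * θ j * ((φ (M+1) - φ M : ℕ) : ℂ)) - 1‖ := by
        rw [hnorm1, one_mul]
    _ = ‖f (φ (M+1)) j - f (φ M) j‖ := by rw [key, norm_mul]
    _ = dist (f (φ M) j) (f (φ (M+1)) j) := by rw [dist_eq_norm, norm_sub_rev]
    _ < δ := hj

set_option maxHeartbeats 1000000 in
/-- **Quantum recurrence theorem, part (i).** For a quantum state with expansion
coefficients `α` in an orthonormal basis of energy eigenstates with nondecreasing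
nonnegative eigenvalues `E`, evolved for time `n·τ`, the squared distance
`∑ ‖α i‖² ‖e^{-i E_i τ n} - 1‖²` back to the initial state can be made `< ε²`
for some `n > 0`. -/
theorem quantum_recurrence (τ : ℝ) (hτ : 0 < τ) (E : ℕ → ℝ) (hE : Monotone E)
    (hE0 : ∀ i, 0 ≤ E i) (α : ℕ → ℂ) (hα : ∑' i, ‖α i‖ ^ 2 = 1)
    (ε : ℝ) (hε : 0 < ε) :
    ∃ n : ℕ, 0 < n ∧
      ∑' i, ‖α i‖ ^ 2 * ‖Complex.exp (-Complex.I * (E i) * τ * n) - 1‖ ^ 2 < ε ^ 2 := by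
  have hsum : Summable (fun i => ‖α i‖ ^ 2) := by
    by_contra h
    rw [tsum_eq_zero_of_not_summable h] at hα
    norm_num at hα
  -- choose N with small tail
  obtain ⟨N, hN⟩ : ∃ N, ∑' i, ‖α (i + N)‖ ^ 2 < ε ^ 2 / 8 := by
    have h1 := hsum.hasSum.tendsto_sum_nat
    rw [hα] at h1
    obtain ⟨N, hNs⟩ := Metric.tendsto_atTop.mp h1 (ε ^ 2 / 8) (by positivity)
    refine ⟨N, ?_⟩
    have hsplit := Summable.sum_add_tsum_nat_add (f := fun i => ‖α i‖ ^ 2) N hsum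
    rw [hα] at hsplit
    have hd := hNs N le_rfl
    rw [Real.dist_eq] at hd
    have := abs_lt.mp hd
    linarith [this.1, this.2]
  -- choose n with all front phases close to 1, δ = ε/2
  obtain ⟨n, hn, hj⟩ := simul_recurrence N (fun j => E j * τ) (ε / 2) (half_pos hε)
  refine ⟨n, hn, ?_⟩
  set g : ℕ → ℝ := fun i => ‖α i‖ ^ 2 * ‖Complex.exp (-Complex.I * (E i) * τ * n) - 1‖ ^ 2
    with hg
  have hgnn : ∀ i, 0 ≤ g i := fun i => by positivity
  have hgle : ∀ i, g i ≤ 4 * ‖α i‖ ^ 2 := by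
    intro i
    have h2 : ‖Complex.exp (-Complex.I * (E i) * τ * n) - 1‖ ≤ 2 := by
      have := norm_exp_neg_I_mul (E i * τ) n
      have heq : (-Complex.I * ((E i * τ : ℝ) : ℂ) * n) = -Complex.I * (E i) * τ * n := by
        push_cast; ring
      rwa [heq] at this
    have hnn : (0:ℝ) ≤ ‖Complex.exp (-Complex.I * (E i) * τ * n) - 1‖ := norm_nonneg _
    have hgi : g i = ‖α i‖ ^ 2 * ‖Complex.exp (-Complex.I * (E i) * τ * n) - 1‖ ^ 2 := rfl
    rw [hgi]
    have hx2 : ‖Complex.exp (-Complex.I * (E i) * τ * n) - 1‖ ^ 2 ≤ 4 := by nlinarith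
    nlinarith [mul_le_mul_of_nonneg_left hx2 (sq_nonneg ‖α i‖)]
  have hgsum : Summable g :=
    Summable.of_nonneg_of_le hgnn hgle (hsum.mul_left 4)
  have hsplit := Summable.sum_add_tsum_nat_add (f := g) N hgsum
  rw [← hsplit]
  -- head bound
  have hhead : ∑ i ∈ Finset.range N, g i ≤ (ε / 2) ^ 2 := by
    have hterm : ∀ i ∈ Finset.range N, g i ≤ ‖α i‖ ^ 2 * (ε / 2) ^ 2 := by
      intro i hi
      rw [Finset.mem_range] at hi
      have := hj ⟨i, hi⟩
      simp only at this
      have heq : (-Complex.I * ((E i * τ : ℝ) : ℂ) * n) = -Complex.I * (E i) * τ * n := by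
        push_cast; ring
      rw [heq] at this
      have hnn : (0:ℝ) ≤ ‖Complex.exp (-Complex.I * (E i) * τ * n) - 1‖ := norm_nonneg _
      have hsq : ‖Complex.exp (-Complex.I * (E i) * τ * n) - 1‖ ^ 2 ≤ (ε / 2) ^ 2 := by
        nlinarith
      have : g i ≤ ‖α i‖ ^ 2 * (ε / 2) ^ 2 := by
        rw [hg]
        exact mul_le_mul_of_nonneg_left hsq (by positivity)
      exact this
    calc ∑ i ∈ Finset.range N, g i
        ≤ ∑ i ∈ Finset.range N, ‖α i‖ ^ 2 * (ε / 2) ^ 2 := Finset.sum_le_sum hterm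
      _ = (∑ i ∈ Finset.range N, ‖α i‖ ^ 2) * (ε / 2) ^ 2 := by rw [← Finset.sum_mul]
      _ ≤ 1 * (ε / 2) ^ 2 := by
          apply mul_le_mul_of_nonneg_right _ (by positivity)
          rw [← hα]
          exact Summable.sum_le_tsum _ (fun i _ => by positivity) hsum
      _ = (ε / 2) ^ 2 := one_mul _
  -- tail bound
  have htail : ∑' i, g (i + N) ≤ 4 * ∑' i, ‖α (i + N)‖ ^ 2 := by
    calc ∑' i, g (i + N) ≤ ∑' i, 4 * ‖α (i + N)‖ ^ 2 :=
          Summable.tsum_le_tsum (fun i => hgle (i + N))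
            ((summable_nat_add_iff N).mpr hgsum)
            ((summable_nat_add_iff N).mpr (hsum.mul_left 4))
      _ = 4 * ∑' i, ‖α (i + N)‖ ^ 2 := tsum_mul_left
  have : (ε / 2) ^ 2 + 4 * (ε ^ 2 / 8) < ε ^ 2 := by nlinarith
  linarith
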